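/- arXiv:1006.2462 — 5 statements merged into one kernel-verified Lean document; each statement's English description precedes it below -/
import Mathlib

section
/- For integers 1 ≤ l < r ≤ n, the sum over m ≤ -1 and m ≥ n+2 of 1/(|r-m|·|m-l|) is at most (1/(r-l))·(log((n+1-l)/(n+1-r)) + log(r/l)). -/
open Real

private lemma key_term (a b : ℝ) (ha : 0 < a) (hab : a < b) (k : ℕ) :
    1 / ((a + 1 + k) * (b + 1 + k)) ≤
      (1 / (b - a)) * (Real.log ((b + k) / (a + k)) - Real.log ((b + (k + 1)) / (a + (k + 1)))) := by
  set u : ℝ := a + k with hu_def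
  set v : ℝ := b + k with hv_def
  have hu : 0 < u := by positivity
  have huv : u < v := add_lt_add_left hab _
  have hv : 0 < v := lt_trans hu huv
  have hu1 : 0 < u + 1 := by linarith
  have hv1 : 0 < v + 1 := by linarith
  have hd : 0 < b - a := by linarith
  have hdvu : b - a = v - u := by rw [hu_def, hv_def]; ring
  -- log inequality: log((v+1)/(u+1)) - log(v/u) ≤ -(v-u)/((u+1)*v)
  have hx : (0:ℝ) < (v + 1) * u / ((u + 1) * v) := by positivity
  have hlog := Real.log_le_sub_one_of_pos hx
  have hrw : Real.log ((v + 1) * u / ((u + 1) * v)) =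
      Real.log ((v + 1) / (u + 1)) - Real.log (v / u) := by
    rw [Real.log_div (by positivity) (by positivity),
      Real.log_mul (by positivity) (by positivity),
      Real.log_mul (by positivity) (by positivity),
      Real.log_div (by positivity) (by positivity),
      Real.log_div (by positivity) (by positivity)]
    ring
  rw [hrw] at hlog
  have hineq1 : (v - u) / ((u + 1) * v) ≤
      Real.log (v / u) - Real.log ((v + 1) / (u + 1)) := by
    have h2 : (v + 1) * u / ((u + 1) * v) - 1 = -((v - u) / ((u + 1) * v)) := by
      field_simp
      ring
    rw [h2] at hlog
    linarith
  have hgoal1 : 1 / ((u + 1) * (v + 1)) ≤ (1 / (v - u)) * ((v - u) / ((u + 1) * v)) := by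
    have heq : (1 / (v - u)) * ((v - u) / ((u + 1) * v)) = 1 / ((u + 1) * v) := by
      field_simp
      rw [div_self (ne_of_gt (sub_pos.mpr huv))]
    rw [heq]
    apply one_div_le_one_div_of_le (by positivity)
    nlinarith
  have : a + 1 + (k:ℝ) = u + 1 := by rw [hu_def]; ring
  rw [this]
  have : b + 1 + (k:ℝ) = v + 1 := by rw [hv_def]; ring
  rw [this]
  have e1 : b + ((k:ℝ) + 1) = v + 1 := by rw [hv_def]; ring
  have e2 : a + ((k:ℝ) + 1) = u + 1 := by rw [hu_def]; ring
  rw [e1, e2, hdvu]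
  calc 1 / ((u + 1) * (v + 1)) ≤ (1 / (v - u)) * ((v - u) / ((u + 1) * v)) := hgoal1
    _ ≤ (1 / (v - u)) * (Real.log (v / u) - Real.log ((v + 1) / (u + 1))) := by
        exact mul_le_mul_of_nonneg_left hineq1 (one_div_nonneg.mpr (by linarith))

private lemma key_sum (a b : ℝ) (ha : 0 < a) (hab : a < b) (N : ℕ) :
    ∑ k ∈ Finset.range N, 1 / ((a + 1 + k) * (b + 1 + k)) ≤
      (1 / (b - a)) * Real.log (b / a) := by
  have hd : 0 < b - a := by linarith
  have step : ∑ k ∈ Finset.range N, 1 / ((a + 1 + k) * (b + 1 + k)) ≤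
      ∑ k ∈ Finset.range N,
        (1 / (b - a)) * (Real.log ((b + k) / (a + k)) - Real.log ((b + (k + 1)) / (a + (k + 1)))) := by
    apply Finset.sum_le_sum
    intro k _
    exact key_term a b ha hab k
  have tele : ∑ k ∈ Finset.range N,
      (Real.log ((b + k) / (a + k)) - Real.log ((b + (k + 1)) / (a + (k + 1)))) =
      Real.log ((b + (0:ℕ)) / (a + (0:ℕ))) - Real.log ((b + N) / (a + N)) := by
    have := Finset.sum_range_sub' (fun k : ℕ => Real.log ((b + k) / (a + k))) N
    simp only [Nat.cast_add, Nat.cast_one] at this ⊢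
    exact this
  rw [← Finset.mul_sum] at step
  rw [tele] at step
  have hlogN : 0 ≤ Real.log ((b + N) / (a + N)) := by
    apply Real.log_nonneg
    rw [le_div_iff₀ (by positivity)]
    nlinarith
  calc ∑ k ∈ Finset.range N, 1 / ((a + 1 + k) * (b + 1 + k))
      ≤ (1 / (b - a)) * (Real.log ((b + (0:ℕ)) / (a + (0:ℕ))) - Real.log ((b + N) / (a + N))) := step
    _ ≤ (1 / (b - a)) * Real.log (b / a) := by
        simp only [Nat.cast_zero, add_zero]
        apply mul_le_mul_of_nonneg_left _ (one_div_nonneg.mpr (le_of_lt hd))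
        linarith

private lemma key_summable (a b : ℝ) (ha : 0 < a) (hab : a < b) :
    Summable (fun k : ℕ => 1 / ((a + 1 + k) * (b + 1 + k))) := by
  apply summable_of_sum_range_le (c := (1 / (b - a)) * Real.log (b / a))
  · intro k
    have hk : (0:ℝ) ≤ k := Nat.cast_nonneg k
    apply le_of_lt
    apply div_pos one_pos
    apply mul_pos <;> linarith
  · exact key_sum a b ha hab

private lemma key_tsum (a b : ℝ) (ha : 0 < a) (hab : a < b) :
    (∑' k : ℕ, 1 / ((a + 1 + k) * (b + 1 + k))) ≤ (1 / (b - a)) * Real.log (b / a) := by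
  apply Real.tsum_le_of_sum_range_le
  · intro k
    have hk : (0:ℝ) ≤ k := Nat.cast_nonneg k
    apply le_of_lt
    apply div_pos one_pos
    apply mul_pos <;> linarith
  · exact key_sum a b ha hab

private def eL : ℕ ≃ {m : ℤ | m ≤ -1} where
  toFun k := ⟨-(1 + (k : ℤ)), by simp only [Set.mem_setOf_eq]; omega⟩
  invFun m := (-(m.1 + 1)).toNat
  left_inv k := by simp only; omega
  right_inv m := by
    rcases m with ⟨m, hm⟩
    simp only [Set.mem_setOf_eq] at hm
    ext
    simp only
    omega

private def eR (n : ℕ) : ℕ ≃ {m : ℤ | (n : ℤ) + 2 ≤ m} where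
  toFun k := ⟨(n : ℤ) + 2 + k, by simp only [Set.mem_setOf_eq]; omega⟩
  invFun m := (m.1 - ((n : ℤ) + 2)).toNat
  left_inv k := by simp only; omega
  right_inv m := by
    rcases m with ⟨m, hm⟩
    simp only [Set.mem_setOf_eq] at hm
    ext
    simp only
    omega

/-- For `1 ≤ l < r ≤ n`, the sum over `m ≤ -1` and `m ≥ n+2` of `1/(|r-m|·|m-l|)`
is at most `(1/(r-l))·(log((n+1-l)/(n+1-r)) + log(r/l))`. -/
theorem tail_sum_log_bound (n r l : ℕ) (hn : 1 ≤ n)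
    (hl : 1 ≤ l) (hlr : l < r) (hrn : r ≤ n) :
    (∑' m : {m : ℤ // m ≤ -1 ∨ (n : ℤ) + 2 ≤ m},
        1 / (|(r : ℝ) - (m.1 : ℝ)| * |(m.1 : ℝ) - (l : ℝ)|)) ≤
      (1 / ((r : ℝ) - l)) *
        (Real.log (((n : ℝ) + 1 - l) / ((n : ℝ) + 1 - r)) + Real.log ((r : ℝ) / l)) := by
  set f : ℤ → ℝ := fun m => 1 / (|(r : ℝ) - (m : ℝ)| * |(m : ℝ) - (l : ℝ)|) with hf
  have hl' : (0:ℝ) < l := by exact_mod_cast hl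
  have hlr' : (l:ℝ) < r := by exact_mod_cast hlr
  have hrn' : (r:ℝ) ≤ n := by exact_mod_cast hrn
  have ha' : (0:ℝ) < (n:ℝ) + 1 - r := by linarith
  have hab' : (n:ℝ) + 1 - r < (n:ℝ) + 1 - l := by linarith
  -- left tail
  have hgL : (fun k : ℕ => f ((eL k : {m : ℤ | m ≤ -1}) : ℤ)) =
      fun k : ℕ => 1 / (((l:ℝ) + 1 + k) * ((r:ℝ) + 1 + k)) := by
    funext k
    show 1 / (|(r:ℝ) - ((-(1 + (k:ℤ)) : ℤ) : ℝ)| * |((-(1 + (k:ℤ)) : ℤ) : ℝ) - l|) = _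
    have h1 : ((-(1 + (k:ℤ)) : ℤ) : ℝ) = -(1 + (k:ℝ)) := by push_cast; ring
    rw [h1, show (r:ℝ) - -(1 + (k:ℝ)) = (r:ℝ) + 1 + k by ring,
        show -(1 + (k:ℝ)) - (l:ℝ) = -((l:ℝ) + 1 + k) by ring, abs_neg,
        abs_of_pos (by positivity), abs_of_pos (by positivity)]
    ring
  have hgR : (fun k : ℕ => f ((eR n k : {m : ℤ | (n:ℤ) + 2 ≤ m}) : ℤ)) =
      fun k : ℕ => 1 / ((((n:ℝ) + 1 - r) + 1 + k) * (((n:ℝ) + 1 - l) + 1 + k)) := by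
    funext k
    show 1 / (|(r:ℝ) - (((n:ℤ) + 2 + k : ℤ) : ℝ)| * |(((n:ℤ) + 2 + k : ℤ) : ℝ) - l|) = _
    have h1 : (((n:ℤ) + 2 + k : ℤ) : ℝ) = (n:ℝ) + 2 + k := by push_cast; ring
    have hk : (0:ℝ) ≤ k := Nat.cast_nonneg k
    rw [h1, show (r:ℝ) - ((n:ℝ) + 2 + k) = -((((n:ℝ) + 1 - r) + 1 + k)) by ring, abs_neg,
        show ((n:ℝ) + 2 + k) - (l:ℝ) = ((n:ℝ) + 1 - l) + 1 + k by ring,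
        abs_of_pos (by linarith), abs_of_pos (by linarith)]
  have hSL : Summable (fun x : {m : ℤ | m ≤ -1} => f x) := by
    have h1 : Summable (fun k : ℕ => f ((eL k : {m : ℤ | m ≤ -1}) : ℤ)) := by
      rw [hgL]; exact key_summable _ _ hl' hlr'
    exact eL.summable_iff.mp h1
  have hSR : Summable (fun x : {m : ℤ | (n:ℤ) + 2 ≤ m} => f x) := by
    have h1 : Summable (fun k : ℕ => f ((eR n k : {m : ℤ | (n:ℤ) + 2 ≤ m}) : ℤ)) := by
      rw [hgR]; exact key_summable _ _ ha' hab'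
    exact (eR n).summable_iff.mp h1
  have hdisj : Disjoint {m : ℤ | m ≤ -1} {m : ℤ | (n:ℤ) + 2 ≤ m} := by
    rw [Set.disjoint_left]
    intro m hm1 hm2
    simp only [Set.mem_setOf_eq] at hm1 hm2
    omega
  have hunion : (∑' m : {m : ℤ // m ≤ -1 ∨ (n : ℤ) + 2 ≤ m}, f m.1) =
      (∑' x : ({m : ℤ | m ≤ -1} ∪ {m : ℤ | (n:ℤ) + 2 ≤ m} : Set ℤ), f x) := rfl
  have hsplit := Summable.tsum_union_disjoint (f := f) hdisj hSL hSR
  have hL : (∑' x : {m : ℤ | m ≤ -1}, f x) ≤ (1 / ((r:ℝ) - l)) * Real.log ((r:ℝ) / l) := by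
    rw [← Equiv.tsum_eq eL (fun x : {m : ℤ | m ≤ -1} => f x)]
    calc (∑' k : ℕ, f ((eL k : {m : ℤ | m ≤ -1}) : ℤ))
        = ∑' k : ℕ, 1 / (((l:ℝ) + 1 + k) * ((r:ℝ) + 1 + k)) := by rw [hgL]
      _ ≤ (1 / ((r:ℝ) - l)) * Real.log ((r:ℝ) / l) := key_tsum _ _ hl' hlr'
  have hR : (∑' x : {m : ℤ | (n:ℤ) + 2 ≤ m}, f x) ≤
      (1 / ((r:ℝ) - l)) * Real.log (((n:ℝ) + 1 - l) / ((n:ℝ) + 1 - r)) := by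
    rw [← Equiv.tsum_eq (eR n) (fun x : {m : ℤ | (n:ℤ) + 2 ≤ m} => f x)]
    have heq : ((n:ℝ) + 1 - l) - ((n:ℝ) + 1 - r) = (r:ℝ) - l := by ring
    calc (∑' k : ℕ, f ((eR n k : {m : ℤ | (n:ℤ) + 2 ≤ m}) : ℤ))
        = ∑' k : ℕ, 1 / ((((n:ℝ) + 1 - r) + 1 + k) * (((n:ℝ) + 1 - l) + 1 + k)) := by rw [hgR]
      _ ≤ (1 / (((n:ℝ) + 1 - l) - ((n:ℝ) + 1 - r))) *
            Real.log (((n:ℝ) + 1 - l) / ((n:ℝ) + 1 - r)) := key_tsum _ _ ha' hab'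
      _ = (1 / ((r:ℝ) - l)) * Real.log (((n:ℝ) + 1 - l) / ((n:ℝ) + 1 - r)) := by rw [heq]
  calc (∑' m : {m : ℤ // m ≤ -1 ∨ (n : ℤ) + 2 ≤ m}, f m.1)
      = (∑' x : {m : ℤ | m ≤ -1}, f x) + (∑' x : {m : ℤ | (n:ℤ) + 2 ≤ m}, f x) := by
        rw [hunion, hsplit]
    _ ≤ (1 / ((r:ℝ) - l)) * Real.log ((r:ℝ) / l) +
          (1 / ((r:ℝ) - l)) * Real.log (((n:ℝ) + 1 - l) / ((n:ℝ) + 1 - r)) :=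
        add_le_add hL hR
    _ = (1 / ((r : ℝ) - l)) *
        (Real.log (((n : ℝ) + 1 - l) / ((n : ℝ) + 1 - r)) + Real.log ((r : ℝ) / l)) := by ring
end

section
/- For integers 1 ≤ l < r ≤ n, we have log((n+1-l)/(n+1-r)) ≤ (r-l)/(n+1-r) and log(r/l) ≤ (r-l)/l; consequently Σ_{m≤-1, m≥n+2} 1/(|r-m||m-l|) ≤ 1/(n+1-r) + 1/l. -/
open Real Filter

lemma telescope_hasSum (a : ℝ) (ha : 0 < a) :
    HasSum (fun j : ℕ => 1/(a+j) - 1/(a+j+1)) (1/a) := by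
  have hnn : ∀ j : ℕ, 0 ≤ 1/(a+(j:ℝ)) - 1/(a+j+1) := by
    intro j
    have h1 : (0:ℝ) < a + j := by positivity
    rw [sub_nonneg]
    exact one_div_le_one_div_of_le h1 (by linarith)
  rw [hasSum_iff_tendsto_nat_of_nonneg hnn]
  have hsum : (fun N => ∑ j ∈ Finset.range N, (1/(a+(j:ℝ)) - 1/(a+j+1)))
      = fun N : ℕ => 1/a - 1/(a+N) := by
    funext N
    have h := Finset.sum_range_sub' (f := fun j : ℕ => 1/(a+(j:ℝ))) N
    simp only [Nat.cast_add, Nat.cast_one, Nat.cast_zero, add_zero] at h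
    rw [← h]
    apply Finset.sum_congr rfl
    intro j _
    ring_nf
  rw [hsum]
  have h2 : Tendsto (fun N : ℕ => 1/(a + N)) atTop (nhds 0) := by
    simp only [one_div]
    apply Filter.Tendsto.inv_tendsto_atTop
    exact tendsto_atTop_add_const_left _ a tendsto_natCast_atTop_atTop
  simpa using tendsto_const_nhds.sub h2

def eNeg : ℕ ≃ {m : ℤ // m ≤ -1} where
  toFun j := ⟨-1 - (j:ℤ), by omega⟩
  invFun m := (-1 - m.1).toNat
  left_inv j := by change (-1 - (-1 - (j:ℤ))).toNat = j; omega
  right_inv m := Subtype.ext (by have := m.2; change -1 - (((-1 - m.1).toNat : ℤ)) = m.1; omega)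

def ePos (n : ℕ) : ℕ ≃ {m : ℤ // (n:ℤ)+2 ≤ m} where
  toFun j := ⟨(n:ℤ)+2+(j:ℤ), by omega⟩
  invFun m := (m.1 - ((n:ℤ)+2)).toNat
  left_inv j := by change ((n:ℤ)+2+(j:ℤ) - ((n:ℤ)+2)).toNat = j; omega
  right_inv m := Subtype.ext (by have := m.2; change (n:ℤ)+2+(((m.1 - ((n:ℤ)+2)).toNat : ℤ)) = m.1; omega)

/-- For `1 ≤ l < r ≤ n`: `log((n+1-l)/(n+1-r)) ≤ (r-l)/(n+1-r)`, `log(r/l) ≤ (r-l)/l`,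
and consequently the tail sum is at most `1/(n+1-r) + 1/l`. -/
theorem tail_sum_simple_bound (n r l : ℕ) (hn : 1 ≤ n)
    (hl : 1 ≤ l) (hlr : l < r) (hrn : r ≤ n) :
    Real.log (((n : ℝ) + 1 - l) / ((n : ℝ) + 1 - r)) ≤ ((r : ℝ) - l) / ((n : ℝ) + 1 - r) ∧
    Real.log ((r : ℝ) / l) ≤ ((r : ℝ) - l) / l ∧
    (∑' m : {m : ℤ // m ≤ -1 ∨ (n : ℤ) + 2 ≤ m},
        1 / (|(r : ℝ) - (m.1 : ℝ)| * |(m.1 : ℝ) - (l : ℝ)|)) ≤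
      1 / ((n : ℝ) + 1 - r) + 1 / l := by
  have hl1 : (1:ℝ) ≤ l := by exact_mod_cast hl
  have hlr' : (l:ℝ) < r := by exact_mod_cast hlr
  have hrn' : (r:ℝ) ≤ n := by exact_mod_cast hrn
  have hy1 : (0:ℝ) < (n:ℝ)+1-r := by linarith
  have hl0 : (0:ℝ) < l := by linarith
  have hr0 : (0:ℝ) < r := by linarith
  have key : ∀ x y : ℝ, 0 < y → 0 < x → Real.log (x/y) ≤ (x-y)/y := by
    intro x y hy hx
    have h := Real.log_le_sub_one_of_pos (show (0:ℝ) < x/y by positivity)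
    calc Real.log (x/y) ≤ x/y - 1 := h
      _ = (x-y)/y := by field_simp
  refine ⟨?_, ?_, ?_⟩
  · have h := key ((n:ℝ)+1-l) ((n:ℝ)+1-r) hy1 (by linarith)
    have he : ((n:ℝ)+1-l) - ((n:ℝ)+1-r) = (r:ℝ) - l := by ring
    rwa [he] at h
  · exact key r l hl0 hr0
  · set F : ℤ → ℝ := fun m => 1 / (|(r:ℝ) - (m:ℝ)| * |(m:ℝ) - (l:ℝ)|) with hF
    set f1 : ℕ → ℝ := fun j => F (-1 - (j:ℤ)) with hf1
    set f2 : ℕ → ℝ := fun j => F ((n:ℤ)+2+(j:ℤ)) with hf2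
    have hFnn : ∀ m : ℤ, 0 ≤ F m := fun m => by positivity
    -- bound for negative side
    have hb1 : ∀ j : ℕ, f1 j ≤ 1/((l:ℝ)+j) - 1/((l:ℝ)+j+1) := by
      intro j
      have hj : (0:ℝ) ≤ j := Nat.cast_nonneg j
      have ec : ((-1 - (j:ℤ) : ℤ):ℝ) = -1 - (j:ℝ) := by push_cast; try ring
      simp only [hf1, hF, ec]
      have a1 : |(r:ℝ) - (-1 - (j:ℝ))| = (r:ℝ)+1+j := by
        rw [abs_of_nonneg (by linarith)]; try ring
      have a2 : |(-1 - (j:ℝ)) - l| = (l:ℝ)+1+j := by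
        rw [abs_of_nonpos (by linarith)]; try ring
      rw [a1, a2]
      have hrhs : 1/((l:ℝ)+j) - 1/((l:ℝ)+j+1) = 1/(((l:ℝ)+j)*((l:ℝ)+j+1)) := by
        field_simp
        try ring
      rw [hrhs]
      apply one_div_le_one_div_of_le (by positivity)
      nlinarith
    -- bound for positive side
    have hb2 : ∀ j : ℕ, f2 j ≤ 1/((n:ℝ)+1-r+j) - 1/((n:ℝ)+1-r+j+1) := by
      intro j
      have hj : (0:ℝ) ≤ j := Nat.cast_nonneg j
      have ec : (((n:ℤ)+2+(j:ℤ) : ℤ):ℝ) = (n:ℝ)+2+(j:ℝ) := by push_cast; try ring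
      simp only [hf2, hF, ec]
      have a1 : |(r:ℝ) - ((n:ℝ)+2+(j:ℝ))| = (n:ℝ)+2+j-r := by
        rw [abs_of_nonpos (by linarith)]; try ring
      have a2 : |((n:ℝ)+2+(j:ℝ)) - l| = (n:ℝ)+2+j-l := by
        rw [abs_of_nonneg (by linarith)]; try ring
      rw [a1, a2]
      have hrhs : 1/((n:ℝ)+1-r+j) - 1/((n:ℝ)+1-r+j+1)
          = 1/(((n:ℝ)+1-r+j)*((n:ℝ)+1-r+j+1)) := by
        field_simp
        try ring
      rw [hrhs]
      apply one_div_le_one_div_of_le (by positivity)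
      nlinarith
    have hg1 : HasSum (fun j : ℕ => 1/((l:ℝ)+j) - 1/((l:ℝ)+j+1)) (1/(l:ℝ)) :=
      telescope_hasSum _ hl0
    have hg2 : HasSum (fun j : ℕ => 1/((n:ℝ)+1-r+j) - 1/((n:ℝ)+1-r+j+1)) (1/((n:ℝ)+1-r)) :=
      telescope_hasSum _ hy1
    have hS1 : Summable f1 :=
      Summable.of_nonneg_of_le (fun j => hFnn _) hb1 hg1.summable
    have hS2 : Summable f2 :=
      Summable.of_nonneg_of_le (fun j => hFnn _) hb2 hg2.summable
    have ht1 : ∑' j, f1 j ≤ 1/(l:ℝ) := by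
      calc ∑' j, f1 j ≤ ∑' j : ℕ, (1/((l:ℝ)+j) - 1/((l:ℝ)+j+1)) :=
            Summable.tsum_le_tsum hb1 hS1 hg1.summable
        _ = 1/(l:ℝ) := hg1.tsum_eq
    have ht2 : ∑' j, f2 j ≤ 1/((n:ℝ)+1-r) := by
      calc ∑' j, f2 j ≤ ∑' j : ℕ, (1/((n:ℝ)+1-r+j) - 1/((n:ℝ)+1-r+j+1)) :=
            Summable.tsum_le_tsum hb2 hS2 hg2.summable
        _ = 1/((n:ℝ)+1-r) := hg2.tsum_eq
    -- assemble via set union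
    have hsum1' : Summable (F ∘ (↑) : {m : ℤ | m ≤ -1} → ℝ) :=
      (Equiv.summable_iff eNeg).mp hS1
    have hsum2' : Summable (F ∘ (↑) : {m : ℤ | (n:ℤ)+2 ≤ m} → ℝ) :=
      (Equiv.summable_iff (ePos n)).mp hS2
    have hdisj : Disjoint {m : ℤ | m ≤ -1} {m : ℤ | (n:ℤ)+2 ≤ m} := by
      rw [Set.disjoint_left]
      intro m h1 h2
      simp only [Set.mem_setOf_eq] at h1 h2
      omega
    have heq : (∑' m : {m : ℤ // m ≤ -1 ∨ (n : ℤ) + 2 ≤ m},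
        1 / (|(r : ℝ) - (m.1 : ℝ)| * |(m.1 : ℝ) - (l : ℝ)|))
        = ∑' x : ↥({m : ℤ | m ≤ -1} ∪ {m : ℤ | (n:ℤ)+2 ≤ m}), F x := rfl
    rw [heq, Summable.tsum_union_disjoint hdisj hsum1' hsum2']
    have e1 : ∑' x : {m : ℤ | m ≤ -1}, F x = ∑' j, f1 j :=
      (Equiv.tsum_eq eNeg (F ∘ (↑) : {m : ℤ | m ≤ -1} → ℝ)).symm
    have e2 : ∑' x : {m : ℤ | (n:ℤ)+2 ≤ m}, F x = ∑' j, f2 j :=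
      (Equiv.tsum_eq (ePos n) (F ∘ (↑) : {m : ℤ | (n:ℤ)+2 ≤ m} → ℝ)).symm
    rw [e1, e2]
    linarith
end

section
/- Let b_{rl} = (1/2π) Σ_{m ≤ 0 or m ≥ n+1} a_{r-m} a_{m-l}, where (a_k) are the Fourier coefficients of the step function a with jump at L. Then for all 1 ≤ l < r ≤ n, |b_{rl}| ≤ (16/π²)·(1 + log n)/(r - l). -/
open Real

private lemma harm_le (n : ℕ) : ∑ j ∈ Finset.Icc 1 n, ((j:ℝ))⁻¹ ≤ 1 + Real.log n := by
  have h := harmonic_le_one_add_log n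
  have h2 : ((harmonic n : ℚ) : ℝ) = ∑ j ∈ Finset.Icc 1 n, ((j:ℝ))⁻¹ := by
    rw [harmonic_eq_sum_Icc]; push_cast; ring
  linarith [h2 ▸ h]

private lemma tail_bound (c d n : ℕ) (hc : 1 ≤ c) (hd : 1 ≤ d) (hcd : c + d ≤ n + 1) :
    Summable (fun k : ℕ => ((c:ℝ)+k)⁻¹ * ((c:ℝ)+d+k)⁻¹) ∧
    ∑' k : ℕ, ((c:ℝ)+k)⁻¹ * ((c:ℝ)+d+k)⁻¹ ≤ (1/d) * (1 + Real.log n) := by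
  have hpos : ∀ k : ℕ, (0:ℝ) < (c:ℝ)+k := fun k => by positivity
  have hnn : ∀ k : ℕ, 0 ≤ ((c:ℝ)+k)⁻¹ * ((c:ℝ)+d+k)⁻¹ := fun k => by positivity
  have key : ∀ N : ℕ, ∑ k ∈ Finset.range N, ((c:ℝ)+k)⁻¹ * ((c:ℝ)+d+k)⁻¹
      ≤ (1/d) * (1 + Real.log n) := by
    intro N
    have h1 : ∀ k : ℕ, ((c:ℝ)+k)⁻¹ * ((c:ℝ)+d+k)⁻¹
        = (1/d) * (((c:ℝ)+k)⁻¹ - ((c:ℝ)+d+k)⁻¹) := by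
      intro k
      have h2 : (0:ℝ) < (c:ℝ)+k := hpos k
      have h3 : (0:ℝ) < (c:ℝ)+d+k := by positivity
      have h4 : (0:ℝ) < (d:ℕ) := by exact_mod_cast hd
      field_simp
      ring
    calc ∑ k ∈ Finset.range N, ((c:ℝ)+k)⁻¹ * ((c:ℝ)+d+k)⁻¹
        = (1/d) * ∑ k ∈ Finset.range N, (((c:ℝ)+k)⁻¹ - ((c:ℝ)+d+k)⁻¹) := by
          rw [Finset.mul_sum]; exact Finset.sum_congr rfl fun k _ => h1 k
      _ ≤ (1/d) * (1 + Real.log n) := by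
          apply mul_le_mul_of_nonneg_left _ (by positivity)
          have hsplit : ∑ k ∈ Finset.range (d + N), ((c:ℝ)+k)⁻¹
              = ∑ k ∈ Finset.range d, ((c:ℝ)+k)⁻¹
                + ∑ k ∈ Finset.range N, ((c:ℝ)+d+k)⁻¹ := by
            rw [Finset.sum_range_add]
            congr 1
            exact Finset.sum_congr rfl fun k _ => by push_cast; ring
          have hsub : ∑ k ∈ Finset.range N, ((c:ℝ)+k)⁻¹
              ≤ ∑ k ∈ Finset.range (d + N), ((c:ℝ)+k)⁻¹ := by
            apply Finset.sum_le_sum_of_subset_of_nonneg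
            · exact Finset.range_subset_range.2 (Nat.le_add_left _ _)
            · intro i _ _; positivity
          have hrange : ∑ k ∈ Finset.range d, ((c:ℝ)+k)⁻¹ ≤ 1 + Real.log n := by
            have heq : ∑ k ∈ Finset.range d, ((c:ℝ)+k)⁻¹
                = ∑ j ∈ Finset.Ico c (c + d), ((j:ℝ))⁻¹ := by
              rw [Finset.sum_Ico_eq_sum_range]
              simp only [Nat.add_sub_cancel_left]
              exact Finset.sum_congr rfl fun k _ => by push_cast; ring
            rw [heq]
            refine le_trans ?_ (harm_le n)
            apply Finset.sum_le_sum_of_subset_of_nonneg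
            · intro j hj
              simp only [Finset.mem_Ico] at hj
              simp only [Finset.mem_Icc]
              omega
            · intro i _ _; positivity
          rw [Finset.sum_sub_distrib]
          linarith
  exact ⟨summable_of_sum_range_le hnn key, Real.tsum_le_of_sum_range_le hnn key⟩

/-- Off-diagonal bound `|b_{rl}| ≤ (16/π²)(1 + log n)/(r - l)` for the entries of the
matrix `B_n = P A Q A P` built from the Fourier coefficients of the step symbol. -/
theorem b_offdiag_bound (L : ℝ) (hL0 : 0 ≤ L) (hLπ : L < π)
    (a : ℤ → ℂ)
    (ha0 : a 0 = (-(Real.sqrt (2 / π)) * L : ℂ))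
    (hak : ∀ k : ℤ, k ≠ 0 →
      a k = (Real.sqrt (2 / π) : ℂ) * ((-1) ^ k / (Complex.I * k)) *
        (1 - Complex.exp (Complex.I * k * (L + π))))
    (n : ℕ) (hn : 1 ≤ n) (r l : ℤ) (hl : 1 ≤ l) (hlr : l < r) (hrn : r ≤ (n : ℤ)) :
    ‖((1 / (2 * π) : ℂ) *
        ∑' m : {m : ℤ // m ≤ 0 ∨ (n : ℤ) + 1 ≤ m}, a (r - m.1) * a (m.1 - l))‖ ≤
      (16 / π ^ 2) * (1 + Real.log n) / ((r : ℝ) - (l : ℝ)) := by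
  classical
  have hπ : (0:ℝ) < π := Real.pi_pos
  -- basic bound on |a k|
  have abs_a : ∀ k : ℤ, k ≠ 0 → ‖a k‖ ≤ 2 / |(k:ℝ)| := by
    intro k hk
    have hkne : ((k:ℝ)) ≠ 0 := Int.cast_ne_zero.2 hk
    have h3 : ‖1 - Complex.exp (Complex.I * k * (L + π))‖ ≤ 2 := by
      have h := norm_sub_le (1:ℂ) (Complex.exp (Complex.I * k * (L + π)))
      have he : ‖Complex.exp (Complex.I * k * (L + π))‖ = 1 := by
        rw [Complex.norm_exp]
        have hre : (Complex.I * k * (L + π)).re = 0 := by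
          simp [Complex.mul_re, Complex.mul_im]
        rw [hre, Real.exp_zero]
      rw [he] at h
      simp only [norm_one] at h
      linarith
    have hdiv : ‖(-1:ℂ)^k / (Complex.I * k)‖ = 1 / |(k:ℝ)| := by
      rw [norm_div, norm_mul, Complex.norm_I, one_mul, Complex.norm_intCast, norm_zpow]
      simp
    have hs : Real.sqrt (2/π) ≤ 1 := by
      rw [show (1:ℝ) = Real.sqrt 1 by simp]
      apply Real.sqrt_le_sqrt
      rw [div_le_one Real.pi_pos]
      linarith [Real.pi_gt_three]
    have habs : ‖a k‖
        = Real.sqrt (2/π) * (1/|(k:ℝ)|) * ‖1 - Complex.exp (Complex.I * k * (L+π))‖ := by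
      rw [hak k hk, norm_mul, norm_mul, hdiv, Complex.norm_real, Real.norm_eq_abs,
        abs_of_nonneg (Real.sqrt_nonneg _)]
    rw [habs]
    have hknn : (0:ℝ) < |(k:ℝ)| := abs_pos.2 hkne
    calc Real.sqrt (2/π) * (1/|(k:ℝ)|) * ‖1 - Complex.exp (Complex.I * k * (L+π))‖
        ≤ 1 * (1/|(k:ℝ)|) * 2 := by
          gcongr
      _ = 2 / |(k:ℝ)| := by ring
  -- the natural number parameters
  set l' : ℕ := l.toNat with hl'def
  set d : ℕ := (r - l).toNat with hddef
  set c' : ℕ := ((n:ℤ) + 1 - r).toNat with hc'def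
  have hl'z : (l' : ℤ) = l := Int.toNat_of_nonneg (by omega)
  have hdz : (d : ℤ) = r - l := Int.toNat_of_nonneg (by omega)
  have hc'z : (c' : ℤ) = (n:ℤ) + 1 - r := Int.toNat_of_nonneg (by omega)
  have hl1 : 1 ≤ l' := by omega
  have hd1 : 1 ≤ d := by omega
  have hc1 : 1 ≤ c' := by omega
  have hld : l' + d ≤ n + 1 := by omega
  have hcd : c' + d ≤ n + 1 := by omega
  obtain ⟨S1, T1⟩ := tail_bound l' d n hl1 hd1 hld
  obtain ⟨S2, T2⟩ := tail_bound c' d n hc1 hd1 hcd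
  -- pointwise bounds
  have hb1 : ∀ m : ℤ, m ≤ 0 → ‖a (r - m) * a (m - l)‖
      ≤ 4 * (((l':ℝ) + (-m).toNat)⁻¹ * ((l':ℝ) + d + (-m).toNat)⁻¹) := by
    intro m hm
    set k : ℕ := (-m).toNat with hkdef
    have hkz : (k : ℤ) = -m := Int.toNat_of_nonneg (by omega)
    have e1 : |((r - m : ℤ) : ℝ)| = (l':ℝ) + d + k := by
      have h1 : (r - m : ℤ) = (l':ℤ) + d + k := by omega
      rw [h1]
      push_cast
      rw [abs_of_nonneg (by positivity)]
    have e2 : |((m - l : ℤ) : ℝ)| = (l':ℝ) + k := by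
      have h1 : (m - l : ℤ) = -((l':ℤ) + k) := by omega
      rw [h1]
      push_cast
      rw [abs_neg, abs_of_nonneg (by positivity)]
    have p1 : (0:ℝ) < (l':ℝ) + d + k := by positivity
    have p2 : (0:ℝ) < (l':ℝ) + k := by positivity
    rw [norm_mul]
    calc ‖a (r - m)‖ * ‖a (m - l)‖
        ≤ (2 / |((r - m : ℤ) : ℝ)|) * (2 / |((m - l : ℤ) : ℝ)|) := by
          apply mul_le_mul (abs_a _ (by omega)) (abs_a _ (by omega))
            (norm_nonneg _) (by positivity)
      _ = 4 * (((l':ℝ) + k)⁻¹ * ((l':ℝ) + d + k)⁻¹) := by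
          rw [e1, e2]; field_simp; ring
  have hb2 : ∀ m : ℤ, (n:ℤ) + 1 ≤ m → ‖a (r - m) * a (m - l)‖
      ≤ 4 * (((c':ℝ) + (m - ((n:ℤ)+1)).toNat)⁻¹ * ((c':ℝ) + d + (m - ((n:ℤ)+1)).toNat)⁻¹) := by
    intro m hm
    set k : ℕ := (m - ((n:ℤ)+1)).toNat with hkdef
    have hkz : (k : ℤ) = m - ((n:ℤ)+1) := Int.toNat_of_nonneg (by omega)
    have e1 : |((r - m : ℤ) : ℝ)| = (c':ℝ) + k := by
      have h1 : (r - m : ℤ) = -((c':ℤ) + k) := by omega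
      rw [h1]
      push_cast
      rw [abs_neg, abs_of_nonneg (by positivity)]
    have e2 : |((m - l : ℤ) : ℝ)| = (c':ℝ) + d + k := by
      have h1 : (m - l : ℤ) = (c':ℤ) + d + k := by omega
      rw [h1]
      push_cast
      rw [abs_of_nonneg (by positivity)]
    have p1 : (0:ℝ) < (c':ℝ) + d + k := by positivity
    have p2 : (0:ℝ) < (c':ℝ) + k := by positivity
    rw [norm_mul]
    calc ‖a (r - m)‖ * ‖a (m - l)‖
        ≤ (2 / |((r - m : ℤ) : ℝ)|) * (2 / |((m - l : ℤ) : ℝ)|) := by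
          apply mul_le_mul (abs_a _ (by omega)) (abs_a _ (by omega))
            (norm_nonneg _) (by positivity)
      _ = 4 * (((c':ℝ) + k)⁻¹ * ((c':ℝ) + d + k)⁻¹) := by
          rw [e1, e2]; field_simp; ring
  -- the norm function on the subtype
  set S := {m : ℤ // m ≤ 0 ∨ (n : ℤ) + 1 ≤ m} with hSdef
  set f : S → ℂ := fun m => a (r - m.1) * a (m.1 - l) with hfdef
  set C : ℝ := 4 * ((1/(d:ℝ)) * (1 + Real.log n)) + 4 * ((1/(d:ℝ)) * (1 + Real.log n)) with hCdef
  have hsum : ∀ u : Finset S, ∑ m ∈ u, ‖f m‖ ≤ C := by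
    intro u
    rw [← Finset.sum_filter_add_sum_filter_not u (fun m => m.1 ≤ 0)]
    have part1 : ∑ m ∈ u.filter (fun m => m.1 ≤ 0), ‖f m‖
        ≤ 4 * ((1/(d:ℝ)) * (1 + Real.log n)) := by
      calc ∑ m ∈ u.filter (fun m => m.1 ≤ 0), ‖f m‖
          ≤ ∑ m ∈ u.filter (fun m => m.1 ≤ 0),
            4 * (((l':ℝ) + (-m.1).toNat)⁻¹ * ((l':ℝ) + d + (-m.1).toNat)⁻¹) := by
            apply Finset.sum_le_sum
            intro m hm
            rw [Finset.mem_filter] at hm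
            exact hb1 m.1 hm.2
        _ = 4 * ∑ m ∈ u.filter (fun m => m.1 ≤ 0),
            (((l':ℝ) + (-m.1).toNat)⁻¹ * ((l':ℝ) + d + (-m.1).toNat)⁻¹) := by
            rw [Finset.mul_sum]
        _ ≤ 4 * ((1/(d:ℝ)) * (1 + Real.log n)) := by
            apply mul_le_mul_of_nonneg_left _ (by norm_num)
            have hinj : ∀ m₁ ∈ u.filter (fun m : S => m.1 ≤ 0), ∀ m₂ ∈ u.filter (fun m : S => m.1 ≤ 0),
                (fun m : S => (-m.1).toNat) m₁ = (fun m : S => (-m.1).toNat) m₂ → m₁ = m₂ := by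
              intro m₁ h₁ m₂ h₂ hmm
              rw [Finset.mem_filter] at h₁ h₂
              simp only at hmm
              apply Subtype.ext
              omega
            have himg := Finset.sum_image (f := fun k : ℕ => ((l':ℝ) + k)⁻¹ * ((l':ℝ) + d + k)⁻¹) hinj
            refine le_trans (le_of_eq himg.symm) ?_
            refine le_trans (Summable.sum_le_tsum _ (fun k _ => by positivity) S1) T1
    have part2 : ∑ m ∈ u.filter (fun m => ¬ m.1 ≤ 0), ‖f m‖
        ≤ 4 * ((1/(d:ℝ)) * (1 + Real.log n)) := by
      calc ∑ m ∈ u.filter (fun m => ¬ m.1 ≤ 0), ‖f m‖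
          ≤ ∑ m ∈ u.filter (fun m => ¬ m.1 ≤ 0),
            4 * (((c':ℝ) + (m.1 - ((n:ℤ)+1)).toNat)⁻¹ * ((c':ℝ) + d + (m.1 - ((n:ℤ)+1)).toNat)⁻¹) := by
            apply Finset.sum_le_sum
            intro m hm
            rw [Finset.mem_filter] at hm
            have : (n:ℤ) + 1 ≤ m.1 := by
              rcases m.2 with h | h
              · exact absurd h hm.2
              · exact h
            exact hb2 m.1 this
        _ = 4 * ∑ m ∈ u.filter (fun m => ¬ m.1 ≤ 0),
            (((c':ℝ) + (m.1 - ((n:ℤ)+1)).toNat)⁻¹ * ((c':ℝ) + d + (m.1 - ((n:ℤ)+1)).toNat)⁻¹) := by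
            rw [Finset.mul_sum]
        _ ≤ 4 * ((1/(d:ℝ)) * (1 + Real.log n)) := by
            apply mul_le_mul_of_nonneg_left _ (by norm_num)
            have hinj : ∀ m₁ ∈ u.filter (fun m : S => ¬ m.1 ≤ 0), ∀ m₂ ∈ u.filter (fun m : S => ¬ m.1 ≤ 0),
                (fun m : S => (m.1 - ((n:ℤ)+1)).toNat) m₁ = (fun m : S => (m.1 - ((n:ℤ)+1)).toNat) m₂ → m₁ = m₂ := by
              intro m₁ h₁ m₂ h₂ hmm
              rw [Finset.mem_filter] at h₁ h₂
              have e₁ : (n:ℤ) + 1 ≤ m₁.1 := by rcases m₁.2 with h | h; exact absurd h h₁.2; exact h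
              have e₂ : (n:ℤ) + 1 ≤ m₂.1 := by rcases m₂.2 with h | h; exact absurd h h₂.2; exact h
              simp only at hmm
              apply Subtype.ext
              omega
            have himg := Finset.sum_image (f := fun k : ℕ => ((c':ℝ) + k)⁻¹ * ((c':ℝ) + d + k)⁻¹) hinj
            refine le_trans (le_of_eq himg.symm) ?_
            refine le_trans (Summable.sum_le_tsum _ (fun k _ => by positivity) S2) T2
    rw [hCdef]
    linarith
  have hFsummable : Summable (fun m : S => ‖f m‖) :=
    summable_of_sum_le (fun m => norm_nonneg _) hsum
  have htsum_norm : ∑' m : S, ‖f m‖ ≤ C := Summable.tsum_le_of_sum_le hFsummable hsum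
  have hnormtsum : ‖∑' m : S, f m‖ ≤ C :=
    le_trans (norm_tsum_le_tsum_norm hFsummable) htsum_norm
  -- final assembly
  have habsfac : ‖((1 / (2 * π) : ℂ))‖ = 1 / (2 * π) := by
    rw [norm_div, norm_one, norm_mul, Complex.norm_two, Complex.norm_real, Real.norm_eq_abs,
      abs_of_pos hπ]
  rw [norm_mul, habsfac]
  have hD : (0:ℝ) < (r:ℝ) - (l:ℝ) := by
    have : (l:ℝ) < (r:ℝ) := by exact_mod_cast hlr
    linarith
  have hdr : ((d:ℕ):ℝ) = (r:ℝ) - (l:ℝ) := by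
    rw [show ((d:ℕ):ℝ) = (((d:ℕ):ℤ):ℝ) by push_cast; ring, hdz]
    push_cast
    ring
  have hE : (0:ℝ) ≤ 1 + Real.log n := by
    have : (0:ℝ) ≤ Real.log n := Real.log_nonneg (by exact_mod_cast hn)
    linarith
  have hCle : C = 8 * ((1 + Real.log n) / ((r:ℝ) - (l:ℝ))) := by
    rw [hCdef, hdr]
    ring
  have step1 : 1 / (2*π) * ‖∑' m : S, f m‖ ≤ 1 / (2*π) * C := by
    apply mul_le_mul_of_nonneg_left _ (by positivity)
    exact hnormtsum
  refine le_trans step1 ?_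
  rw [hCle]
  have h2 : (4:ℝ)/π ≤ 16/π^2 := by
    rw [div_le_div_iff₀ hπ (by positivity)]
    nlinarith [Real.pi_le_four, hπ]
  have e3 : 1/(2*π) * (8 * ((1 + Real.log n)/((r:ℝ)-(l:ℝ))))
      = (4/π) * ((1 + Real.log n)/((r:ℝ)-(l:ℝ))) := by
    field_simp
    ring
  have e4 : 16/π^2 * (1 + Real.log n) / ((r:ℝ)-(l:ℝ))
      = (16/π^2) * ((1 + Real.log n)/((r:ℝ)-(l:ℝ))) := by ring
  rw [e3, e4]
  exact mul_le_mul_of_nonneg_right h2 (div_nonneg hE hD.le)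
end

section
/- With b_{rl} as in the squared Toeplitz construction, for all 1 ≤ l ≤ r ≤ n we have |b_{rl}| ≤ (8/π²)·(1/(n+1-r) + 1/l). -/
open Real

lemma tele_sum (c : ℝ) (hc : 1 ≤ c) (N : ℕ) :
    ∑ j ∈ Finset.range N, 1 / ((c + j) * (c + j)) ≤ 2 / c - 2 / (c + N) := by
  induction N with
  | zero => simp
  | succ N ih =>
    rw [Finset.sum_range_succ]
    have hx : (0:ℝ) < c + N := by positivity
    have hx1 : (0:ℝ) < c + N + 1 := by positivity
    have key : 1 / ((c + N) * (c + N)) ≤ 2 / (c + N) - 2 / (c + N + 1) := by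
      rw [div_sub_div _ _ hx.ne' hx1.ne', div_le_div_iff₀ (by positivity) (by positivity)]
      nlinarith
    push_cast
    have e : c + (↑N + 1) = c + ↑N + 1 := by ring
    rw [e]
    linarith

lemma sq_summable (c : ℝ) (hc : 1 ≤ c) :
    Summable (fun j : ℕ => 1 / ((c + j) * (c + j))) := by
  apply summable_of_sum_range_le (fun j => by positivity)
  intro N
  have h := tele_sum c hc N
  have : 0 ≤ 2 / (c + N) := by positivity
  linarith

lemma sq_tsum_le (c : ℝ) (hc : 1 ≤ c) :
    ∑' j : ℕ, 1 / ((c + j) * (c + j)) ≤ 2 / c := by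
  apply Summable.tsum_le_of_sum_range_le (sq_summable c hc)
  intro N
  have h := tele_sum c hc N
  have : 0 ≤ 2 / (c + N) := by positivity
  linarith

/-- Bound `|b_{rl}| ≤ (8/π²)(1/(n+1-r) + 1/l)` for `1 ≤ l ≤ r ≤ n`. -/
theorem b_edge_bound (L : ℝ) (hL0 : 0 ≤ L) (hLπ : L < π)
    (a : ℤ → ℂ)
    (ha0 : a 0 = (-(Real.sqrt (2 / π)) * L : ℂ))
    (hak : ∀ k : ℤ, k ≠ 0 →
      a k = (Real.sqrt (2 / π) : ℂ) * ((-1) ^ k / (Complex.I * k)) *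
        (1 - Complex.exp (Complex.I * k * (L + π))))
    (n : ℕ) (hn : 1 ≤ n) (r l : ℤ) (hl : 1 ≤ l) (hlr : l ≤ r) (hrn : r ≤ (n : ℤ)) :
    ‖(1 / (2 * π) : ℂ) *
        ∑' m : {m : ℤ // m ≤ 0 ∨ (n : ℤ) + 1 ≤ m}, a (r - m.1) * a (m.1 - l)‖ ≤
      (8 / π ^ 2) * (1 / ((n : ℝ) + 1 - (r : ℝ)) + 1 / (l : ℝ)) := by
  have hπ : (0:ℝ) < π := Real.pi_pos
  -- bound on |a k|
  have a_bound : ∀ k : ℤ, k ≠ 0 → ‖a k‖ ≤ Real.sqrt (2 / π) * (2 / |(k:ℝ)|) := by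
    intro k hk
    have hkR : (k:ℝ) ≠ 0 := Int.cast_ne_zero.mpr hk
    rw [hak k hk, norm_mul, norm_mul]
    have h1 : ‖((Real.sqrt (2 / π) : ℂ))‖ = Real.sqrt (2 / π) := by
      rw [Complex.norm_real, Real.norm_of_nonneg (Real.sqrt_nonneg _)]
    have h2 : ‖(-1 : ℂ) ^ k / (Complex.I * k)‖ = 1 / |(k:ℝ)| := by
      rw [norm_div, norm_mul, norm_zpow]
      simp [Complex.norm_I, Complex.norm_intCast]
    have h3 : ‖1 - Complex.exp (Complex.I * k * (L + π))‖ ≤ 2 := by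
      have he : ‖Complex.exp (Complex.I * k * (L + π))‖ = 1 := by
        rw [Complex.norm_exp]
        have : (Complex.I * k * (L + π)).re = 0 := by
          simp [Complex.mul_re, Complex.mul_im]
        rw [this, Real.exp_zero]
      calc ‖1 - Complex.exp (Complex.I * k * (L + π))‖
          ≤ ‖(1:ℂ)‖ + ‖Complex.exp (Complex.I * k * (L + π))‖ := by
            exact norm_sub_le (1:ℂ) (Complex.exp (Complex.I * k * (L + π)))
        _ = 2 := by rw [he]; simp; norm_num
    rw [h1, h2]
    calc Real.sqrt (2 / π) * (1 / |(k:ℝ)|) * ‖1 - Complex.exp (Complex.I * k * (L + π))‖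
        ≤ Real.sqrt (2 / π) * (1 / |(k:ℝ)|) * 2 := by
          apply mul_le_mul_of_nonneg_left h3; positivity
      _ = Real.sqrt (2 / π) * (2 / |(k:ℝ)|) := by ring
  -- product bound
  have prod_bound : ∀ k₁ k₂ : ℤ, k₁ ≠ 0 → k₂ ≠ 0 →
      ‖a k₁ * a k₂‖ ≤ (8 / π) * (1 / (|(k₁:ℝ)| * |(k₂:ℝ)|)) := by
    intro k₁ k₂ h₁ h₂
    have hk₁ : (0:ℝ) < |(k₁:ℝ)| := abs_pos.mpr (Int.cast_ne_zero.mpr h₁)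
    have hk₂ : (0:ℝ) < |(k₂:ℝ)| := abs_pos.mpr (Int.cast_ne_zero.mpr h₂)
    rw [norm_mul]
    calc ‖a k₁‖ * ‖a k₂‖
        ≤ (Real.sqrt (2 / π) * (2 / |(k₁:ℝ)|)) * (Real.sqrt (2 / π) * (2 / |(k₂:ℝ)|)) := by
          apply mul_le_mul (a_bound k₁ h₁) (a_bound k₂ h₂) (norm_nonneg _)
          positivity
      _ = (Real.sqrt (2 / π) * Real.sqrt (2 / π)) * (2 * 2) / (|(k₁:ℝ)| * |(k₂:ℝ)|) := by ring
      _ = (8 / π) * (1 / (|(k₁:ℝ)| * |(k₂:ℝ)|)) := by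
          rw [Real.mul_self_sqrt (by positivity)]
          field_simp
          ring
  -- numbers
  have hlR : (1:ℝ) ≤ (l:ℝ) := by exact_mod_cast hl
  have hrR : (l:ℝ) ≤ (r:ℝ) := by exact_mod_cast hlr
  have hcrR : (1:ℝ) ≤ (n:ℝ) + 1 - (r:ℝ) := by
    have : (r:ℝ) ≤ (n:ℝ) := by exact_mod_cast hrn
    linarith
  set cl : ℝ := (l:ℝ) with hcl_def
  set cr : ℝ := (n:ℝ) + 1 - (r:ℝ) with hcr_def
  -- the function and index sets
  set F : ℤ → ℂ := fun m => a (r - m) * a (m - l) with hF_def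
  set G : ℤ → ℝ := fun m => ‖F m‖ with hG_def
  set s1 : Set ℤ := {m : ℤ | m ≤ 0} with hs1_def
  set s2 : Set ℤ := {m : ℤ | (n:ℤ) + 1 ≤ m} with hs2_def
  set f1 : ℕ → ℤ := fun j => -(j:ℤ) with hf1_def
  set f2 : ℕ → ℤ := fun j => (n:ℤ) + 1 + j with hf2_def
  have hinj1 : Function.Injective f1 := by intro x y h; simpa [hf1_def] using h
  have hinj2 : Function.Injective f2 := by
    intro x y h; simp only [hf2_def, add_right_inj] at h; exact_mod_cast h
  have hr1 : Set.range f1 = s1 := by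
    ext m; simp only [Set.mem_range, hs1_def, Set.mem_setOf_eq, hf1_def]
    constructor
    · rintro ⟨j, rfl⟩; omega
    · intro hm; exact ⟨(-m).toNat, by omega⟩
  have hr2 : Set.range f2 = s2 := by
    ext m; simp only [Set.mem_range, hs2_def, Set.mem_setOf_eq, hf2_def]
    constructor
    · rintro ⟨j, rfl⟩; omega
    · intro hm; exact ⟨(m - ((n:ℤ)+1)).toNat, by omega⟩
  have hdisj : Disjoint s1 s2 := by
    rw [Set.disjoint_left]
    intro m hm1 hm2
    simp only [hs1_def, hs2_def, Set.mem_setOf_eq] at hm1 hm2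
    omega
  -- helper comparison step
  have step : ∀ A B C : ℝ, 1 ≤ C → C ≤ A → C ≤ B →
      (8/π) * (1/(A*B)) ≤ (8/π) * (1/(C*C)) := by
    intro A B C h1 hA hB
    apply mul_le_mul_of_nonneg_left _ (by positivity)
    apply one_div_le_one_div_of_le (by nlinarith) (by nlinarith)
  -- branch bounds
  have hb1 : ∀ j : ℕ, G (f1 j) ≤ (8/π) * (1/((cl+j)*(cl+j))) := by
    intro j
    have hjR : (0:ℝ) ≤ (j:ℝ) := Nat.cast_nonneg j
    have hk1 : r - f1 j ≠ 0 := by simp only [hf1_def]; omega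
    have hk2 : f1 j - l ≠ 0 := by simp only [hf1_def]; omega
    have e1 : |((r - f1 j : ℤ):ℝ)| = (r:ℝ) + j := by
      have : ((r - f1 j : ℤ):ℝ) = (r:ℝ) + j := by simp only [hf1_def]; push_cast; ring
      rw [this, abs_of_pos (by linarith)]
    have e2 : |((f1 j - l : ℤ):ℝ)| = cl + j := by
      have : ((f1 j - l : ℤ):ℝ) = -((cl:ℝ) + j) := by simp only [hf1_def, hcl_def]; push_cast; ring
      rw [this, abs_neg, abs_of_pos (by linarith)]
    refine (prod_bound _ _ hk1 hk2).trans ?_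
    rw [e1, e2]
    exact step _ _ _ (by linarith) (by linarith) le_rfl
  have hb2 : ∀ j : ℕ, G (f2 j) ≤ (8/π) * (1/((cr+j)*(cr+j))) := by
    intro j
    have hjR : (0:ℝ) ≤ (j:ℝ) := Nat.cast_nonneg j
    have hk1 : r - f2 j ≠ 0 := by simp only [hf2_def]; omega
    have hk2 : f2 j - l ≠ 0 := by simp only [hf2_def]; omega
    have e1 : |((r - f2 j : ℤ):ℝ)| = cr + j := by
      have : ((r - f2 j : ℤ):ℝ) = -((cr:ℝ) + j) := by simp only [hf2_def, hcr_def]; push_cast; ring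
      rw [this, abs_neg, abs_of_pos (by linarith)]
    have e2 : |((f2 j - l : ℤ):ℝ)| = cr + ((r:ℝ) - cl) + j := by
      have : ((f2 j - l : ℤ):ℝ) = cr + ((r:ℝ) - cl) + j := by
        simp only [hf2_def, hcr_def, hcl_def]; push_cast; ring
      rw [this, abs_of_pos (by linarith)]
    refine (prod_bound _ _ hk1 hk2).trans ?_
    rw [e1, e2]
    exact step _ _ _ (by linarith) le_rfl (by linarith)
  -- summability
  have hg1 : Summable (fun j : ℕ => (8/π) * (1/((cl+j)*(cl+j)))) :=
    (sq_summable cl (by linarith)).mul_left _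
  have hg2 : Summable (fun j : ℕ => (8/π) * (1/((cr+j)*(cr+j)))) :=
    (sq_summable cr (by linarith)).mul_left _
  have hGf1 : Summable (fun j : ℕ => G (f1 j)) :=
    Summable.of_nonneg_of_le (fun j => norm_nonneg _) hb1 hg1
  have hGf2 : Summable (fun j : ℕ => G (f2 j)) :=
    Summable.of_nonneg_of_le (fun j => norm_nonneg _) hb2 hg2
  have hS1 : Summable (G ∘ ((↑) : ↑s1 → ℤ)) := by
    rw [← hr1]
    exact (Equiv.ofInjective f1 hinj1).summable_iff.mp hGf1
  have hS2 : Summable (G ∘ ((↑) : ↑s2 → ℤ)) := by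
    rw [← hr2]
    exact (Equiv.ofInjective f2 hinj2).summable_iff.mp hGf2
  -- tsum bounds over the pieces
  have tA : ∑' m : ↑s1, G ↑m ≤ (8/π) * (2/cl) := by
    rw [← hr1, tsum_range G hinj1]
    calc ∑' j : ℕ, G (f1 j) ≤ ∑' j : ℕ, (8/π) * (1/((cl+j)*(cl+j))) :=
          Summable.tsum_le_tsum hb1 hGf1 hg1
      _ = (8/π) * ∑' j : ℕ, 1/((cl+j)*(cl+j)) := tsum_mul_left
      _ ≤ (8/π) * (2/cl) :=
          mul_le_mul_of_nonneg_left (sq_tsum_le cl (by linarith)) (by positivity)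
  have tB : ∑' m : ↑s2, G ↑m ≤ (8/π) * (2/cr) := by
    rw [← hr2, tsum_range G hinj2]
    calc ∑' j : ℕ, G (f2 j) ≤ ∑' j : ℕ, (8/π) * (1/((cr+j)*(cr+j))) :=
          Summable.tsum_le_tsum hb2 hGf2 hg2
      _ = (8/π) * ∑' j : ℕ, 1/((cr+j)*(cr+j)) := tsum_mul_left
      _ ≤ (8/π) * (2/cr) :=
          mul_le_mul_of_nonneg_left (sq_tsum_le cr (by linarith)) (by positivity)
  -- summability over the union, and union tsum
  have hSU : Summable (G ∘ ((↑) : ↑(s1 ∪ s2) → ℤ)) :=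
    ((hS1.hasSum.add_disjoint hdisj hS2.hasSum)).summable
  have hUnion : ∑' m : ↑(s1 ∪ s2), G ↑m = (∑' m : ↑s1, G ↑m) + ∑' m : ↑s2, G ↑m :=
    Summable.tsum_union_disjoint hdisj hS1 hS2
  have hTbound : ‖∑' m : ↑(s1 ∪ s2), F ↑m‖ ≤ (8/π) * (2/cl) + (8/π) * (2/cr) := by
    have h1 : ‖∑' m : ↑(s1 ∪ s2), F ↑m‖ ≤ ∑' m : ↑(s1 ∪ s2), G ↑m := by
      have := norm_tsum_le_tsum_norm (f := fun m : ↑(s1 ∪ s2) => F ↑m) (by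
        exact hSU)
      simpa [hG_def] using this
    rw [hUnion] at h1
    linarith
  -- final assembly
  have hcabs : ‖((1 / (2 * π) : ℂ))‖ = 1/(2*π) := by
    rw [norm_div, norm_one, norm_mul, Complex.norm_two, Complex.norm_real, Real.norm_of_nonneg hπ.le]
  have habs_eq : ‖(1 / (2 * π) : ℂ) * ∑' m : ↑(s1 ∪ s2), F ↑m‖
      = (1/(2*π)) * ‖∑' m : ↑(s1 ∪ s2), F ↑m‖ := by
    rw [norm_mul, hcabs]
  have final : ‖(1 / (2 * π) : ℂ) * ∑' m : ↑(s1 ∪ s2), F ↑m‖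
      ≤ (8 / π ^ 2) * (1 / cr + 1 / cl) := by
    rw [habs_eq]
    calc (1/(2*π)) * ‖∑' m : ↑(s1 ∪ s2), F ↑m‖
        ≤ (1/(2*π)) * ((8/π) * (2/cl) + (8/π) * (2/cr)) :=
          mul_le_mul_of_nonneg_left hTbound (by positivity)
      _ = (8 / π ^ 2) * (1 / cr + 1 / cl) := by
          field_simp
          ring
  exact final
end

section
/- Let B, D be Hermitian operators on an (n)-dimensional space with B = ΞBΞ + D, where Π, Ξ are complementary orthogonal projections, and suppose |⟨Du,u⟩| ≤ α‖Πu‖² + β‖Ξu‖² for all u, with α < λ. Then n₊(λ, B) ≤ n₊(λ − β, ΞBΞ) and n₊(λ, B) ≥ n₊(λ + β, ΞBΞ), where n₊ counts eigenvalues strictly above the given threshold. -/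
open Matrix Module

variable {n : ℕ}

lemma TE_selfAdjoint {M : Matrix (Fin n) (Fin n) ℂ} (hM : M.IsHermitian) :
    IsSelfAdjoint (Matrix.toEuclideanCLM (𝕜 := ℂ) M) := by
  rw [_root_.IsSelfAdjoint, ← map_star]
  rw [Matrix.star_eq_conjTranspose, hM]

lemma TE_apply_eigenvectorBasis {M : Matrix (Fin n) (Fin n) ℂ} (hM : M.IsHermitian) (j : Fin n) :
    (Matrix.toEuclideanCLM (𝕜 := ℂ) M) (hM.eigenvectorBasis j)
      = (hM.eigenvalues j : ℂ) • hM.eigenvectorBasis j := by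
  apply (WithLp.equiv 2 _).injective
  simp only [Matrix.ofLp_toEuclideanCLM, Matrix.toLin'_apply]
  have h := hM.mulVec_eigenvectorBasis j
  ext i
  have := congrFun h i
  simpa [WithLp.equiv, Complex.real_smul] using this

lemma TE_repr {M : Matrix (Fin n) (Fin n) ℂ} (hM : M.IsHermitian) (u : EuclideanSpace ℂ (Fin n))
    (j : Fin n) :
    hM.eigenvectorBasis.repr ((Matrix.toEuclideanCLM (𝕜 := ℂ) M) u) j
      = (hM.eigenvalues j : ℂ) * hM.eigenvectorBasis.repr u j := by
  have h := (TE_selfAdjoint hM).isSymmetric (hM.eigenvectorBasis j) u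
  simp only [ContinuousLinearMap.coe_coe] at h
  rw [OrthonormalBasis.repr_apply_apply, OrthonormalBasis.repr_apply_apply, ← h,
    TE_apply_eigenvectorBasis hM j, inner_smul_left]
  simp

lemma TE_re_inner {M : Matrix (Fin n) (Fin n) ℂ} (hM : M.IsHermitian)
    (u : EuclideanSpace ℂ (Fin n)) :
    (inner ℂ ((Matrix.toEuclideanCLM (𝕜 := ℂ) M) u) u : ℂ).re
      = ∑ j, hM.eigenvalues j * ‖hM.eigenvectorBasis.repr u j‖ ^ 2 := by
  rw [← hM.eigenvectorBasis.repr.inner_map_map ((Matrix.toEuclideanCLM (𝕜 := ℂ) M) u) u,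
    PiLp.inner_apply]
  simp only [TE_repr hM u, RCLike.inner_apply]
  rw [Complex.re_sum]
  congr 1; ext j
  rw [_root_.map_mul, Complex.conj_ofReal, mul_left_comm, Complex.mul_conj]
  simp [Complex.normSq_eq_norm_sq, ← Complex.ofReal_pow]

lemma norm_sq_repr (b : OrthonormalBasis (Fin n) ℂ (EuclideanSpace ℂ (Fin n)))
    (u : EuclideanSpace ℂ (Fin n)) :
    ‖u‖ ^ 2 = ∑ j, ‖b.repr u j‖ ^ 2 := by
  rw [← b.repr.norm_map u, EuclideanSpace.norm_eq, Real.sq_sqrt (by positivity)]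


/-- Number of eigenvalues (with multiplicity) of a Hermitian matrix strictly above `t`. -/
noncomputable def countAbove {n : ℕ} {M : Matrix (Fin n) (Fin n) ℂ}
    (hM : M.IsHermitian) (t : ℝ) : ℕ :=
  (Finset.univ.filter fun j => t < hM.eigenvalues j).card

lemma finrank_le_countAbove {M : Matrix (Fin n) (Fin n) ℂ} (hM : M.IsHermitian) (t : ℝ)
    (W : Submodule ℂ (EuclideanSpace ℂ (Fin n)))
    (hW : ∀ u ∈ W, u ≠ 0 →
      t * ‖u‖ ^ 2 < (inner ℂ ((Matrix.toEuclideanCLM (𝕜 := ℂ) M) u) u : ℂ).re) :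
    Module.finrank ℂ W ≤ countAbove hM t := by
  classical
  set S : Finset (Fin n) := Finset.univ.filter fun j => t < hM.eigenvalues j with hS
  let f : W →ₗ[ℂ] (S → ℂ) :=
    { toFun := fun u j => hM.eigenvectorBasis.repr u j
      map_add' := by intro u v; ext j; simp
      map_smul' := by intro c u; ext j; simp }
  have hf : Function.Injective f := by
    rw [← LinearMap.ker_eq_bot, LinearMap.ker_eq_bot']
    intro u hu
    by_contra hne
    have hu0 : (u : EuclideanSpace ℂ (Fin n)) ≠ 0 := fun h => hne (Subtype.ext h)
    have hlt := hW u u.2 hu0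
    have hzero : ∀ j ∈ S, hM.eigenvectorBasis.repr u j = 0 := fun j hj => congrFun hu ⟨j, hj⟩
    have hle : (inner ℂ ((Matrix.toEuclideanCLM (𝕜 := ℂ) M) (u : EuclideanSpace ℂ (Fin n)))
        (u : EuclideanSpace ℂ (Fin n)) : ℂ).re ≤ t * ‖(u : EuclideanSpace ℂ (Fin n))‖ ^ 2 := by
      rw [TE_re_inner, norm_sq_repr hM.eigenvectorBasis, Finset.mul_sum]
      apply Finset.sum_le_sum
      intro j _
      by_cases hj : j ∈ S
      · simp [hzero j hj]
      · have hjt : hM.eigenvalues j ≤ t := by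
          simp only [hS, Finset.mem_filter, Finset.mem_univ, true_and, not_lt] at hj
          exact hj
        exact mul_le_mul_of_nonneg_right hjt (by positivity)
    linarith
  calc Module.finrank ℂ W ≤ Module.finrank ℂ (S → ℂ) :=
        LinearMap.finrank_le_finrank_of_injective hf
    _ = S.card := by rw [Module.finrank_fintype_fun_eq_card, Fintype.card_coe]

noncomputable def specSub {M : Matrix (Fin n) (Fin n) ℂ} (hM : M.IsHermitian) (t : ℝ) :
    Submodule ℂ (EuclideanSpace ℂ (Fin n)) :=
  Submodule.span ℂ (Set.range fun j : {j : Fin n // t < hM.eigenvalues j} =>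
    hM.eigenvectorBasis (j : Fin n))

lemma finrank_specSub {M : Matrix (Fin n) (Fin n) ℂ} (hM : M.IsHermitian) (t : ℝ) :
    Module.finrank ℂ (specSub hM t) = countAbove hM t := by
  classical
  have h := finrank_span_eq_card (R := ℂ)
    (hM.eigenvectorBasis.orthonormal.linearIndependent.comp
      ((↑) : {j : Fin n // t < hM.eigenvalues j} → Fin n) Subtype.val_injective)
  rw [specSub]
  refine Eq.trans (b := Fintype.card { j // t < hM.eigenvalues j }) h ?_
  rw [countAbove, Fintype.card_subtype]

lemma specSub_repr {M : Matrix (Fin n) (Fin n) ℂ} (hM : M.IsHermitian) (t : ℝ)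
    {u : EuclideanSpace ℂ (Fin n)} (hu : u ∈ specSub hM t) (j : Fin n)
    (hj : hM.eigenvalues j ≤ t) : hM.eigenvectorBasis.repr u j = 0 := by
  induction hu using Submodule.span_induction with
  | mem x hx =>
    obtain ⟨i, rfl⟩ := hx
    rw [OrthonormalBasis.repr_self, EuclideanSpace.single_apply, if_neg]
    rintro rfl
    exact absurd i.2 (not_lt.mpr hj)
  | zero => simp
  | add x y _ _ hx hy => simp [hx, hy]
  | smul c x _ hx => simp [hx]

lemma specSub_fixed {M : Matrix (Fin n) (Fin n) ℂ} (hM : M.IsHermitian) (t : ℝ)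
    (A : EuclideanSpace ℂ (Fin n) →L[ℂ] EuclideanSpace ℂ (Fin n))
    (hA : ∀ j : Fin n, t < hM.eigenvalues j → A (hM.eigenvectorBasis j) = hM.eigenvectorBasis j)
    {u : EuclideanSpace ℂ (Fin n)} (hu : u ∈ specSub hM t) : A u = u := by
  induction hu using Submodule.span_induction with
  | mem x hx => obtain ⟨i, rfl⟩ := hx; exact hA i i.2
  | zero => simp
  | add x y _ _ hx hy => simp [hx, hy]
  | smul c x _ hx => simp [hx]

lemma specSub_quad {M : Matrix (Fin n) (Fin n) ℂ} (hM : M.IsHermitian) (t : ℝ)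
    {u : EuclideanSpace ℂ (Fin n)} (hu : u ∈ specSub hM t) (hne : u ≠ 0) :
    t * ‖u‖ ^ 2 < (inner ℂ ((Matrix.toEuclideanCLM (𝕜 := ℂ) M) u) u : ℂ).re := by
  rw [TE_re_inner, norm_sq_repr hM.eigenvectorBasis, Finset.mul_sum]
  have hex : ∃ j, hM.eigenvectorBasis.repr u j ≠ 0 := by
    by_contra h
    push_neg at h
    apply hne
    have : hM.eigenvectorBasis.repr u = 0 := by ext j; exact h j
    simpa using hM.eigenvectorBasis.repr.map_eq_zero_iff.mp this
  obtain ⟨j, hj⟩ := hex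
  have hjt : t < hM.eigenvalues j := by
    by_contra h
    exact hj (specSub_repr hM t hu j (not_lt.mp h))
  apply Finset.sum_lt_sum
  · intro i _
    by_cases hi : t < hM.eigenvalues i
    · exact mul_le_mul_of_nonneg_right hi.le (by positivity)
    · rw [specSub_repr hM t hu i (not_lt.mp hi)]
      simp
  · exact ⟨j, Finset.mem_univ j,
      mul_lt_mul_of_pos_right hjt (pow_pos (norm_pos_iff.mpr hj) 2)⟩

set_option maxHeartbeats 1000000 in
/-- If `B = ΞBΞ + D` with `|⟨Du,u⟩| ≤ α‖Πu‖² + β‖Ξu‖²` for all `u`, and `α < λ`, then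
`n₊(λ, B) ≤ n₊(λ - β, ΞBΞ)` and `n₊(λ + β, ΞBΞ) ≤ n₊(λ, B)`. -/
theorem counting_cross_term {n : ℕ} (B Pr Xi : Matrix (Fin n) (Fin n) ℂ)
    (hB : B.IsHermitian) (hPr : Pr.IsHermitian) (hXi : Xi.IsHermitian)
    (hPr2 : Pr * Pr = Pr) (hXi2 : Xi * Xi = Xi)
    (hsum : Pr + Xi = 1) (horth : Pr * Xi = 0)
    (hXBX : (Xi * B * Xi).IsHermitian)
    (α β lam : ℝ) (hα : 0 ≤ α) (hβ : 0 ≤ β) (hlam : α < lam)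
    (hquad : ∀ u : EuclideanSpace ℂ (Fin n),
      ‖(inner ℂ ((Matrix.toEuclideanCLM (𝕜 := ℂ) (B - Xi * B * Xi)) u) u : ℂ)‖ ≤
        α * ‖(Matrix.toEuclideanCLM (𝕜 := ℂ) Pr) u‖ ^ 2 +
          β * ‖(Matrix.toEuclideanCLM (𝕜 := ℂ) Xi) u‖ ^ 2) :
    countAbove hB lam ≤ countAbove hXBX (lam - β) ∧
    countAbove hXBX (lam + β) ≤ countAbove hB lam := by
  classical
  have hmulapp : ∀ (A C : Matrix (Fin n) (Fin n) ℂ) (u : EuclideanSpace ℂ (Fin n)),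
      Matrix.toEuclideanCLM (𝕜 := ℂ) (A * C) u =
        Matrix.toEuclideanCLM (𝕜 := ℂ) A (Matrix.toEuclideanCLM (𝕜 := ℂ) C u) := by
    intro A C u
    rw [_root_.map_mul]
    rfl
  have hXsym : ∀ x y : EuclideanSpace ℂ (Fin n),
      (inner ℂ ((Matrix.toEuclideanCLM (𝕜 := ℂ) Xi) x) y : ℂ) =
        inner ℂ x ((Matrix.toEuclideanCLM (𝕜 := ℂ) Xi) y) := by
    intro x y
    have := (TE_selfAdjoint hXi).isSymmetric x y
    simpa using this
  have hPsym : ∀ x y : EuclideanSpace ℂ (Fin n),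
      (inner ℂ ((Matrix.toEuclideanCLM (𝕜 := ℂ) Pr) x) y : ℂ) =
        inner ℂ x ((Matrix.toEuclideanCLM (𝕜 := ℂ) Pr) y) := by
    intro x y
    have := (TE_selfAdjoint hPr).isSymmetric x y
    simpa using this
  have hsumapp : ∀ u : EuclideanSpace ℂ (Fin n),
      Matrix.toEuclideanCLM (𝕜 := ℂ) Pr u + Matrix.toEuclideanCLM (𝕜 := ℂ) Xi u = u := by
    intro u
    have h := congrArg (fun A => Matrix.toEuclideanCLM (𝕜 := ℂ) A u) hsum
    simpa using h
  have hnorm : ∀ u : EuclideanSpace ℂ (Fin n),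
      ‖u‖ ^ 2 = ‖Matrix.toEuclideanCLM (𝕜 := ℂ) Pr u‖ ^ 2 +
        ‖Matrix.toEuclideanCLM (𝕜 := ℂ) Xi u‖ ^ 2 := by
    intro u
    have hperp : (inner ℂ (Matrix.toEuclideanCLM (𝕜 := ℂ) Pr u)
        (Matrix.toEuclideanCLM (𝕜 := ℂ) Xi u) : ℂ) = 0 := by
      rw [hPsym, ← hmulapp, horth]
      simp
    conv_lhs => rw [← hsumapp u]
    rw [@norm_add_sq ℂ, hperp]
    simp
  have hQdiff : ∀ u : EuclideanSpace ℂ (Fin n),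
      |(inner ℂ ((Matrix.toEuclideanCLM (𝕜 := ℂ) B) u) u : ℂ).re -
        (inner ℂ ((Matrix.toEuclideanCLM (𝕜 := ℂ) (Xi * B * Xi)) u) u : ℂ).re| ≤
        α * ‖Matrix.toEuclideanCLM (𝕜 := ℂ) Pr u‖ ^ 2 +
          β * ‖Matrix.toEuclideanCLM (𝕜 := ℂ) Xi u‖ ^ 2 := by
    intro u
    have h1 : (inner ℂ ((Matrix.toEuclideanCLM (𝕜 := ℂ) (B - Xi * B * Xi)) u) u : ℂ) =
        inner ℂ ((Matrix.toEuclideanCLM (𝕜 := ℂ) B) u) u -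
          inner ℂ ((Matrix.toEuclideanCLM (𝕜 := ℂ) (Xi * B * Xi)) u) u := by
      rw [map_sub, ContinuousLinearMap.sub_apply, inner_sub_left]
    have h2 := hquad u
    rw [h1] at h2
    refine le_trans ?_ h2
    have h3 := Complex.abs_re_le_norm (inner ℂ ((Matrix.toEuclideanCLM (𝕜 := ℂ) B) u) u -
      inner ℂ ((Matrix.toEuclideanCLM (𝕜 := ℂ) (Xi * B * Xi)) u) u)
    simpa [Complex.sub_re] using h3
  have mXX1 : Xi * (Xi * B * Xi) = Xi * B * Xi := by
    rw [← mul_assoc, ← mul_assoc, hXi2]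
  have mXX2 : (Xi * B * Xi) * Xi = Xi * B * Xi := by
    rw [mul_assoc, hXi2]
  constructor
  · -- direction 1
    have hkey : ∀ u ∈ specSub hB lam, u ≠ 0 →
        (lam - α) * ‖Matrix.toEuclideanCLM (𝕜 := ℂ) Pr u‖ ^ 2 +
          (lam - β) * ‖Matrix.toEuclideanCLM (𝕜 := ℂ) Xi u‖ ^ 2 <
          (inner ℂ ((Matrix.toEuclideanCLM (𝕜 := ℂ) (Xi * B * Xi)) u) u : ℂ).re := by
      intro u hu hne
      have hq := specSub_quad hB lam hu hne
      have hd := (abs_le.mp (hQdiff u)).2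
      have hn := hnorm u
      nlinarith [hq, hd, hn]
    have hinj : ∀ u ∈ specSub hB lam, Matrix.toEuclideanCLM (𝕜 := ℂ) Xi u = 0 → u = 0 := by
      intro u hu hXu
      by_contra hne
      have h1 := hkey u hu hne
      have h2 : Matrix.toEuclideanCLM (𝕜 := ℂ) (Xi * B * Xi) u = 0 := by
        rw [← mXX2, hmulapp, hXu]
        simp
      rw [h2, hXu] at h1
      simp only [inner_zero_left, Complex.zero_re, norm_zero] at h1
      have hp : ‖Matrix.toEuclideanCLM (𝕜 := ℂ) Pr u‖ ^ 2 = ‖u‖ ^ 2 := by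
        have := hnorm u
        rw [hXu] at this
        simp at this
        rw [this]
      have hupos : 0 < ‖u‖ ^ 2 := pow_pos (norm_pos_iff.mpr hne) 2
      nlinarith [h1, hp, hupos]
    let g : specSub hB lam →ₗ[ℂ] EuclideanSpace ℂ (Fin n) :=
      (Matrix.toEuclideanLin Xi).comp (specSub hB lam).subtype
    have hgapp : ∀ u : specSub hB lam,
        g u = Matrix.toEuclideanCLM (𝕜 := ℂ) Xi (u : EuclideanSpace ℂ (Fin n)) := fun u => rfl
    have hg : Function.Injective g := by
      rw [← LinearMap.ker_eq_bot, LinearMap.ker_eq_bot']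
      intro u hu0
      rw [hgapp] at hu0
      exact Subtype.ext (hinj u u.2 hu0)
    have hrank : Module.finrank ℂ (LinearMap.range g) = countAbove hB lam := by
      rw [LinearMap.finrank_range_of_inj hg, finrank_specSub]
    rw [← hrank]
    apply finrank_le_countAbove hXBX (lam - β)
    intro v hv hvne
    rw [LinearMap.mem_range] at hv
    obtain ⟨u, rfl⟩ := hv
    rw [hgapp]
    rw [hgapp] at hvne
    have hu : (u : EuclideanSpace ℂ (Fin n)) ∈ specSub hB lam := u.2
    have hune : (u : EuclideanSpace ℂ (Fin n)) ≠ 0 := by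
      rintro h
      apply hvne
      rw [h]
      simp
    have h1 := hkey u hu hune
    have e2 : (inner ℂ ((Matrix.toEuclideanCLM (𝕜 := ℂ) (Xi * B * Xi))
        (Matrix.toEuclideanCLM (𝕜 := ℂ) Xi (u : EuclideanSpace ℂ (Fin n))))
        (Matrix.toEuclideanCLM (𝕜 := ℂ) Xi (u : EuclideanSpace ℂ (Fin n))) : ℂ) =
        inner ℂ ((Matrix.toEuclideanCLM (𝕜 := ℂ) (Xi * B * Xi)) (u : EuclideanSpace ℂ (Fin n)))
          (u : EuclideanSpace ℂ (Fin n)) := by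
      rw [← hmulapp, mXX2, ← hXsym, ← hmulapp, mXX1]
    rw [e2]
    have hpα : 0 ≤ (lam - α) * ‖Matrix.toEuclideanCLM (𝕜 := ℂ) Pr
        (u : EuclideanSpace ℂ (Fin n))‖ ^ 2 :=
      mul_nonneg (le_of_lt (sub_pos.mpr hlam)) (sq_nonneg _)
    linarith
  · -- direction 2
    rw [← finrank_specSub hXBX (lam + β)]
    apply finrank_le_countAbove hB lam
    intro u hu hne
    have hfix : Matrix.toEuclideanCLM (𝕜 := ℂ) Xi u = u := by
      refine specSub_fixed hXBX (lam + β) _ ?_ hu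
      intro j hj
      have hμpos : (0 : ℝ) < hXBX.eigenvalues j := lt_of_le_of_lt (by linarith) hj
      have h1 := TE_apply_eigenvectorBasis hXBX j
      have h2 : Matrix.toEuclideanCLM (𝕜 := ℂ) Xi
          (Matrix.toEuclideanCLM (𝕜 := ℂ) (Xi * B * Xi) (hXBX.eigenvectorBasis j)) =
          Matrix.toEuclideanCLM (𝕜 := ℂ) (Xi * B * Xi) (hXBX.eigenvectorBasis j) := by
        rw [← hmulapp, mXX1]
      rw [h1, _root_.map_smul] at h2
      have hμ : (hXBX.eigenvalues j : ℂ) ≠ 0 := by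
        exact_mod_cast ne_of_gt hμpos
      exact smul_right_injective _ hμ h2
    have hPzero : Matrix.toEuclideanCLM (𝕜 := ℂ) Pr u = 0 := by
      have h := hsumapp u
      rw [hfix] at h
      exact add_right_cancel (h.trans (zero_add u).symm)
    have hq := specSub_quad hXBX (lam + β) hu hne
    have hd := hQdiff u
    rw [hPzero, hfix] at hd
    simp only [norm_zero] at hd
    have habs := abs_le.mp hd
    nlinarith [habs.1, hq]
end
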